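/- There exists a separable compact Hausdorff space X (X has a countable dense subset) that admits a family of ℵ₁ many closed Gδ subsets whose union is X such that no countable subfamily has union X. -/

import Mathlib

open Set

namespace PA


/-- `a` is almost contained in `b`. -/
def AS (a b : Set ℕ) : Prop := (a \ b).Finite

lemma AS.rfl {a : Set ℕ} : AS a a := by simp [AS]

lemma AS.of_subset {a b : Set ℕ} (h : a ⊆ b) : AS a b := by
  simp [AS, diff_eq_empty.2 h]

lemma AS.trans {a b c : Set ℕ} (h1 : AS a b) (h2 : AS b c) : AS a c := by
  refine Finite.subset (h1.union h2) ?_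
  intro x hx
  by_cases hb : x ∈ b
  · exact Or.inr ⟨hb, hx.2⟩
  · exact Or.inl ⟨hx.1, hb⟩

lemma AS.inter_finite {a b c : Set ℕ} (h1 : AS a b) (h2 : (b ∩ c).Finite) :
    (a ∩ c).Finite := by
  refine Finite.subset (h1.union h2) ?_
  intro x hx
  by_cases hb : x ∈ b
  · exact Or.inr ⟨hb, hx.2⟩
  · exact Or.inl ⟨hx.1, hb⟩

lemma AS.diff_finite_of_finite {a b : Set ℕ} (h : AS a b) (hb : b.Finite) : a.Finite := by
  have : a ⊆ (a \ b) ∪ b := fun x hx => by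
    by_cases hxb : x ∈ b
    · exact Or.inr hxb
    · exact Or.inl ⟨hx, hxb⟩
  exact Finite.subset (h.union hb) this

/-- an infinite subset of `ℕ` has an element above any given bound -/
lemma infinite_exists_gt {s : Set ℕ} (hs : s.Infinite) (a : ℕ) : ∃ b ∈ s, a < b := by
  by_contra h
  push_neg at h
  exact hs (Finite.subset (finite_Iic a) h)

/-- pseudo-intersection of an `⊆*`-decreasing sequence of infinite sets -/
lemma pseudoInter (t : ℕ → Set ℕ) (hinf : ∀ i, (t i).Infinite)
    (hdec : ∀ i, AS (t (i + 1)) (t i)) :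
    ∃ P : Set ℕ, P.Infinite ∧ ∀ i, AS P (t i) := by
  -- AS (t i) (t j) for j ≤ i
  have hAS : ∀ i j, j ≤ i → AS (t i) (t j) := by
    intro i
    induction i with
    | zero => intro j hj; simpa [Nat.le_zero.1 hj] using AS.rfl (a := t 0)
    | succ i ih =>
      intro j hj
      rcases Nat.lt_or_ge j (i + 1) with h | h
      · exact (hdec i).trans (ih j (Nat.lt_succ_iff.1 h))
      · have : j = i + 1 := le_antisymm hj h
        simpa [this] using AS.rfl (a := t (i+1))
  -- finite intersections are infinite
  set I : ℕ → Set ℕ := fun i => ⋂ j ∈ Finset.range (i + 1), t j with hI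
  have hIinf : ∀ i, (I i).Infinite := by
    intro i
    have hsub : t i \ (⋃ j ∈ Finset.range (i + 1), (t i \ t j)) ⊆ I i := by
      intro x hx
      simp only [hI, mem_iInter]
      intro j hj
      rcases hx with ⟨hxi, hxu⟩
      by_contra hxj
      exact hxu (mem_biUnion hj ⟨hxi, hxj⟩)
    have hfin : (⋃ j ∈ Finset.range (i + 1), (t i \ t j)).Finite := by
      apply Set.Finite.biUnion (Finset.range (i+1)).finite_toSet
      intro j hj
      exact hAS i j (Nat.lt_succ_iff.1 (Finset.mem_range.1 hj))
    exact ((hinf i).diff hfin).mono hsub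
  -- choose a strictly increasing diagonal sequence
  have hstep : ∀ i (a : ℕ), ∃ b ∈ I i, a < b := fun i a => infinite_exists_gt (hIinf i) a
  choose f hfmem hfgt using hstep
  set x : ℕ → ℕ := fun i => Nat.rec (f 0 0) (fun i xi => f (i + 1) xi) i with hx
  have hx0 : x 0 = f 0 0 := rfl
  have hxs : ∀ i, x (i + 1) = f (i + 1) (x i) := fun i => rfl
  have hmono : StrictMono x := strictMono_nat_of_lt_succ fun i => by
    rw [hxs]; exact hfgt (i + 1) (x i)
  have hxI : ∀ i, x i ∈ I i := by
    intro i
    cases i with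
    | zero => exact hfmem 0 0
    | succ i => rw [hxs]; exact hfmem (i + 1) (x i)
  refine ⟨range x, infinite_range_of_injective hmono.injective, ?_⟩
  intro i
  have : range x \ t i ⊆ x '' {j | j < i} := by
    rintro y ⟨⟨j, rfl⟩, hyt⟩
    refine ⟨j, ?_, rfl⟩
    by_contra hj
    simp only [mem_setOf_eq, not_lt] at hj
    have : x j ∈ I j := hxI j
    have : x j ∈ t i := by
      have := mem_iInter.1 (hxI j)
      have h2 := mem_iInter.1 (this i)
      exact h2 (Finset.mem_range.2 (Nat.lt_succ_of_le hj))
    exact hyt this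
  exact Finite.subset ((finite_Iio i).image x) this

/-- split an infinite set into infinitely many disjoint infinite pieces -/
lemma split {S : Set ℕ} (hS : S.Infinite) :
    ∃ p : ℕ → Set ℕ, (∀ i, (p i).Infinite) ∧ (∀ i, p i ⊆ S) ∧
      ∀ i i', i ≠ i' → Disjoint (p i) (p i') := by
  set f := hS.natEmbedding with hf
  refine ⟨fun i => range fun k => (f (Nat.pair i k) : ℕ), fun i => ?_, fun i => ?_, ?_⟩
  · apply infinite_range_of_injective
    intro k k' h
    have := f.injective (Subtype.val_injective h)
    exact (Nat.pair_eq_pair.1 this).2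
  · rintro y ⟨k, rfl⟩
    exact (f (Nat.pair i k)).2
  · intro i i' hne
    rw [disjoint_left]
    rintro y ⟨k, rfl⟩ ⟨k', hk'⟩
    have := f.injective (Subtype.val_injective hk')
    exact hne ((Nat.pair_eq_pair.1 this).1.symm)

/-- enumeration of the rationals above `a`, each hit infinitely often -/
lemma ratEnumAbove (a : ℚ) : ∃ r : ℕ → ℚ, (∀ j, a < r j) ∧
    ∀ s, a < s → {j | r j = s}.Infinite := by
  classical
  obtain ⟨e, he⟩ := exists_surjective_nat ℚ
  set r : ℕ → ℚ := fun j => if a < e (Nat.unpair j).2 then e (Nat.unpair j).2 else a + 1 with hr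
  refine ⟨r, fun j => ?_, fun s hs => ?_⟩
  · rw [hr]; dsimp only; split
    · assumption
    · linarith
  · obtain ⟨c, hc⟩ := he s
    have key : ∀ i, r (Nat.pair i c) = s := by
      intro i
      rw [hr]
      dsimp only
      rw [Nat.unpair_pair, hc, if_pos hs]
    apply Set.infinite_of_injective_forall_mem (f := fun i => Nat.pair i c)
      (hi := fun i i' h => (Nat.pair_eq_pair.1 h).1)
    intro i
    exact key i

/-- enumeration of the rationals in `(a,b)`, each hit infinitely often -/
lemma ratEnumBtwn (a b : ℚ) (hab : a < b) : ∃ r : ℕ → ℚ, (∀ j, a < r j ∧ r j < b) ∧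
    ∀ s, a < s → s < b → {j | r j = s}.Infinite := by
  obtain ⟨r, hr1, hr2⟩ := ratEnumAbove a
  refine ⟨fun j => if r j < b then r j else (a + b) / 2, fun j => ?_, fun s hs1 hs2 => ?_⟩
  · dsimp only; split
    · exact ⟨hr1 j, by assumption⟩
    · constructor <;> linarith
  · refine (hr2 s hs1).mono ?_
    intro j hj
    simp only [mem_setOf_eq] at hj ⊢
    rw [hj]
    simp [hs2]


/-- A level of the tree: countably many subsets of `ℕ` with rational labels. -/
structure Level where
  A : ℕ → Set ℕ
  q : ℕ → ℚ

/-- internal coherence of one level -/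
def selfOk (L : Level) : Prop :=
  (∀ n, (L.A n).Infinite) ∧ ∀ n m, n ≠ m → (L.A n ∩ L.A m).Finite

/-- coherence between a lower level `Lb` and a higher level `Lg` -/
def okPair (Lb Lg : Level) : Prop :=
  (∀ n m, (AS (Lg.A n) (Lb.A m) ∧ Lb.q m < Lg.q n) ∨ (Lg.A n ∩ Lb.A m).Finite) ∧
  (∀ n, ∃ m, AS (Lg.A n) (Lb.A m)) ∧
  (∀ n q', Lb.q n < q' →
    {m | AS (Lg.A m) (Lb.A n) ∧ Lb.q n < Lg.q m ∧ Lg.q m < q'}.Infinite)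

/-- the base level -/
lemma exists_base : ∃ L : Level, selfOk L := by
  obtain ⟨p, hp1, _, hp3⟩ := split infinite_univ
  exact ⟨⟨p, fun _ => 0⟩, hp1, fun n m hnm => ((hp3 n m hnm).inter_eq ▸ finite_empty)⟩

/-- extending by a successor level -/
lemma exists_succLevel (Ld : Level) (hd : selfOk Ld) :
    ∃ L : Level, selfOk L ∧ okPair Ld L ∧
      ∀ Lb : Level, okPair Lb Ld → okPair Lb L := by
  classical
  -- pieces of each node
  have hsp : ∀ m, ∃ p : ℕ → Set ℕ, (∀ i, (p i).Infinite) ∧ (∀ i, p i ⊆ Ld.A m) ∧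
      ∀ i i', i ≠ i' → Disjoint (p i) (p i') := fun m => split (hd.1 m)
  choose p hp1 hp2 hp3 using hsp
  -- rational labels above each node
  have hsq : ∀ m, ∃ r : ℕ → ℚ, (∀ j, Ld.q m < r j) ∧
      ∀ s, Ld.q m < s → {j | r j = s}.Infinite := fun m => ratEnumAbove (Ld.q m)
  choose r hr1 hr2 using hsq
  set L : Level := ⟨fun c => p (Nat.unpair c).1 (Nat.unpair c).2,
    fun c => r (Nat.unpair c).1 (Nat.unpair c).2⟩ with hL
  have hAc : ∀ c, L.A c = p (Nat.unpair c).1 (Nat.unpair c).2 := fun c => rfl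
  have hqc : ∀ c, L.q c = r (Nat.unpair c).1 (Nat.unpair c).2 := fun c => rfl
  have hsub : ∀ c, L.A c ⊆ Ld.A (Nat.unpair c).1 := fun c => hp2 _ _
  refine ⟨L, ⟨fun c => hp1 _ _, ?_⟩, ⟨?_, ?_, ?_⟩, ?_⟩
  · -- a.d. within the level
    intro c c' hcc
    rcases eq_or_ne (Nat.unpair c).1 (Nat.unpair c').1 with h1 | h1
    · have h2 : (Nat.unpair c).2 ≠ (Nat.unpair c').2 := by
        intro h2
        apply hcc
        have hc := Nat.pair_unpair c
        have hc' := Nat.pair_unpair c'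
        rw [← hc, ← hc', h1, h2]
      have := hp3 (Nat.unpair c).1 (Nat.unpair c).2 (Nat.unpair c').2 h2
      rw [hAc, hAc, ← h1]
      exact (this.inter_eq ▸ finite_empty)
    · exact Finite.subset (hd.2 _ _ h1) (inter_subset_inter (hsub c) (hsub c'))
  · -- H4' w.r.t. Ld
    intro c m'
    rcases eq_or_ne (Nat.unpair c).1 m' with h1 | h1
    · exact Or.inl ⟨AS.of_subset (h1 ▸ hsub c), h1 ▸ hr1 _ _⟩
    · exact Or.inr (Finite.subset (hd.2 _ _ h1) (inter_subset_inter (hsub c) (subset_refl _)))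
  · -- H3 w.r.t. Ld
    exact fun c => ⟨(Nat.unpair c).1, AS.of_subset (hsub c)⟩
  · -- E'' w.r.t. Ld
    intro n q' hq'
    set s₀ : ℚ := (Ld.q n + q') / 2 with hs₀
    have hbs : Ld.q n < s₀ ∧ s₀ < q' := by constructor <;> (rw [hs₀]; linarith)
    have hinf := hr2 n s₀ hbs.1
    have himg : ((fun j => Nat.pair n j) '' {j | r n j = s₀}).Infinite :=
      hinf.image (Set.injOn_of_injective (fun j j' h => (Nat.pair_eq_pair.1 h).2))
    refine himg.mono ?_
    rintro _ ⟨j, hj, rfl⟩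
    simp only [mem_setOf_eq] at hj ⊢
    simp only [hAc, hqc, Nat.unpair_pair]
    exact ⟨AS.of_subset (hp2 _ _), by rw [hj]; exact hbs.1, by rw [hj]; exact hbs.2⟩
  · -- transfer to lower levels
    intro Lb hb
    refine ⟨?_, ?_, ?_⟩
    · intro c n'
      rcases hb.1 (Nat.unpair c).1 n' with ⟨hAS, hq⟩ | hfin
      · exact Or.inl ⟨(AS.of_subset (hsub c)).trans hAS, hq.trans (hr1 _ _)⟩
      · exact Or.inr ((AS.of_subset (hsub c)).inter_finite hfin)
    · intro c
      obtain ⟨m, hm⟩ := hb.2.1 (Nat.unpair c).1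
      exact ⟨m, (AS.of_subset (hsub c)).trans hm⟩
    · intro n q' hq'
      set mid : ℚ := (Lb.q n + q') / 2 with hmid
      have hbm : Lb.q n < mid ∧ mid < q' := by constructor <;> (rw [hmid]; linarith)
      obtain ⟨m, hm1, hm2, hm3⟩ := (hb.2.2 n mid hbm.1).nonempty
      set s₁ : ℚ := (Ld.q m + q') / 2 with hs₁
      have hbs : Ld.q m < s₁ ∧ s₁ < q' := by
        constructor <;> (rw [hs₁]; linarith)
      have hinf := hr2 m s₁ hbs.1
      have himg : ((fun j => Nat.pair m j) '' {j | r m j = s₁}).Infinite :=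
        hinf.image (Set.injOn_of_injective (fun j j' h => (Nat.pair_eq_pair.1 h).2))
      refine himg.mono ?_
      rintro _ ⟨j, hj, rfl⟩
      simp only [mem_setOf_eq] at hj ⊢
      simp only [hAc, hqc, Nat.unpair_pair]
      refine ⟨(AS.of_subset (hp2 _ _)).trans hm1, ?_, ?_⟩
      · rw [hj]; linarith
      · rw [hj]; exact hbs.2


/-! ### Chain machinery for the limit step -/

section Chains

attribute [local instance] Classical.propDecidable

variable (g : ℕ → Level) (k0 : ℕ → ℕ) (S0 : ℕ → Set ℕ) (q0 : ℕ → ℚ) (r : ℕ → ℕ → ℚ)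

/-- nodes forbidden at absolute level `a` for task `k` (used by earlier tasks) -/
def Fb (prev : ℕ → ℕ → ℕ) (k a : ℕ) : Set ℕ :=
  {m | ∃ k', k' < k ∧ k0 k' ≤ a ∧ prev k' a = m}

lemma Fb_finite (prev : ℕ → ℕ → ℕ) (k a : ℕ) : (Fb k0 prev k a).Finite := by
  refine Finite.subset ((finite_Iio k).image (fun k' => prev k' a)) ?_
  rintro m ⟨k', hk', _, rfl⟩
  exact ⟨k', hk', rfl⟩

/-- property of the first chain node of task `k` -/
def P0 (prev : ℕ → ℕ → ℕ) (k m : ℕ) : Prop :=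
  (AS ((g (k0 k)).A m) (S0 k) ∧ q0 k < (g (k0 k)).q m ∧ (g (k0 k)).q m < r k 0) ∧
    m ∉ Fb k0 prev k (k0 k)

/-- property of a successor chain node of task `k` -/
def Pstep (prev : ℕ → ℕ → ℕ) (k j mp m : ℕ) : Prop :=
  (AS ((g (k0 k + j + 1)).A m) ((g (k0 k + j)).A mp) ∧
    (g (k0 k + j)).q mp < (g (k0 k + j + 1)).q m ∧
    (g (k0 k + j + 1)).q m < r k (j + 1)) ∧
    m ∉ Fb k0 prev k (k0 k + j + 1)

/-- the chain of task `k`, relative indexing -/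
noncomputable def relChain (prev : ℕ → ℕ → ℕ) (k : ℕ) : ℕ → ℕ :=
  fun j => Nat.rec
    (if h : ∃ m, P0 g k0 S0 q0 r prev k m then h.choose else 0)
    (fun j cj => if h : ∃ m, Pstep g k0 r prev k j cj m then h.choose else 0) j

/-- chains of all tasks `k < K`, absolute indexing -/
noncomputable def chainPre : ℕ → ℕ → ℕ → ℕ
  | 0, _, _ => 0
  | (K+1), k, a =>
      if k = K then relChain g k0 S0 q0 r (chainPre K) K (a - k0 K)
      else chainPre K k a

/-- the chain of task `k`, absolute indexing -/
noncomputable def chain (k a : ℕ) : ℕ :=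
  chainPre g k0 S0 q0 r (k + 1) k a

lemma chain_eq (k a : ℕ) :
    chain g k0 S0 q0 r k a = relChain g k0 S0 q0 r (chainPre g k0 S0 q0 r k) k (a - k0 k) := by
  simp [chain, chainPre]

lemma chainPre_stab : ∀ K k, k < K → ∀ a,
    chainPre g k0 S0 q0 r K k a = chain g k0 S0 q0 r k a := by
  intro K
  induction K with
  | zero => intro k hk; omega
  | succ K ih =>
    intro k hk a
    rcases eq_or_ne k K with rfl | hne
    · rw [chain_eq]
      simp [chainPre]
    · have : k < K := by omega
      rw [show chainPre g k0 S0 q0 r (K+1) k a = chainPre g k0 S0 q0 r K k a by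
        simp [chainPre, hne]]
      exact ih k this a

section ChainSpec

variable (hgg : ∀ a a', a < a' → okPair (g a) (g a'))
variable (hstart : ∀ k, {m | AS ((g (k0 k)).A m) (S0 k) ∧ q0 k < (g (k0 k)).q m ∧
  (g (k0 k)).q m < r k 0}.Infinite)
variable (hr : ∀ k j, r k j < r k (j + 1))

include hstart in
lemma chain_zero_spec (k : ℕ) :
    P0 g k0 S0 q0 r (chainPre g k0 S0 q0 r k) k
      (relChain g k0 S0 q0 r (chainPre g k0 S0 q0 r k) k 0) := by
  have hex : ∃ m, P0 g k0 S0 q0 r (chainPre g k0 S0 q0 r k) k m := by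
    obtain ⟨m, hm1, hm2⟩ :=
      (((hstart k)).diff (Fb_finite k0 (chainPre g k0 S0 q0 r k) k (k0 k))).nonempty
    exact ⟨m, hm1, hm2⟩
  have hred : relChain g k0 S0 q0 r (chainPre g k0 S0 q0 r k) k 0
      = (if h : ∃ m, P0 g k0 S0 q0 r (chainPre g k0 S0 q0 r k) k m then h.choose else 0) := rfl
  rw [hred, dif_pos hex]
  exact hex.choose_spec

include hgg hstart hr in
lemma chain_succ_spec (k : ℕ) : ∀ j,
    Pstep g k0 r (chainPre g k0 S0 q0 r k) k j
      (relChain g k0 S0 q0 r (chainPre g k0 S0 q0 r k) k j)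
      (relChain g k0 S0 q0 r (chainPre g k0 S0 q0 r k) k (j + 1)) := by
  have key : ∀ j, (g (k0 k + j)).q (relChain g k0 S0 q0 r (chainPre g k0 S0 q0 r k) k j)
      < r k j →
      Pstep g k0 r (chainPre g k0 S0 q0 r k) k j
        (relChain g k0 S0 q0 r (chainPre g k0 S0 q0 r k) k j)
        (relChain g k0 S0 q0 r (chainPre g k0 S0 q0 r k) k (j + 1)) := by
    intro j hq
    have hex : ∃ m, Pstep g k0 r (chainPre g k0 S0 q0 r k) k j
        (relChain g k0 S0 q0 r (chainPre g k0 S0 q0 r k) k j) m := by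
      have hE := (hgg (k0 k + j) (k0 k + j + 1) (by omega)).2.2
        (relChain g k0 S0 q0 r (chainPre g k0 S0 q0 r k) k j)
        (r k (j + 1)) (hq.trans (hr k j))
      obtain ⟨m, hm1, hm2⟩ :=
        (hE.diff (Fb_finite k0 (chainPre g k0 S0 q0 r k) k (k0 k + j + 1))).nonempty
      exact ⟨m, hm1, hm2⟩
    have hred : relChain g k0 S0 q0 r (chainPre g k0 S0 q0 r k) k (j + 1)
        = (if h : ∃ m, Pstep g k0 r (chainPre g k0 S0 q0 r k) k j
            (relChain g k0 S0 q0 r (chainPre g k0 S0 q0 r k) k j) m then h.choose else 0) := rfl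
    rw [hred, dif_pos hex]
    exact hex.choose_spec
  intro j
  induction j with
  | zero => exact key 0 (chain_zero_spec g k0 S0 q0 r hstart k).1.2.2
  | succ j ih => exact key (j + 1) (ih.1.2.2)

include hgg hstart hr in
/-- the `q`-value of a chain node is below `r k j` -/
lemma chain_q (k j : ℕ) :
    (g (k0 k + j)).q (relChain g k0 S0 q0 r (chainPre g k0 S0 q0 r k) k j) < r k j := by
  cases j with
  | zero => exact (chain_zero_spec g k0 S0 q0 r hstart k).1.2.2
  | succ j => exact (chain_succ_spec g k0 S0 q0 r hgg hstart hr k j).1.2.2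

include hgg hstart hr in
/-- nodes of distinct chains at a common absolute level are distinct -/
lemma chain_avoid (k k' : ℕ) (hkk : k' < k) (a : ℕ) (ha : k0 k ≤ a) (ha' : k0 k' ≤ a) :
    chain g k0 S0 q0 r k a ≠ chain g k0 S0 q0 r k' a := by
  have hnot : chain g k0 S0 q0 r k a ∉ Fb k0 (chainPre g k0 S0 q0 r k) k a := by
    rw [chain_eq]
    rcases Nat.exists_eq_add_of_le ha with ⟨j, rfl⟩
    rw [Nat.add_sub_cancel_left]
    cases j with
    | zero => exact (chain_zero_spec g k0 S0 q0 r hstart k).2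
    | succ j => exact (chain_succ_spec g k0 S0 q0 r hgg hstart hr k j).2
  intro heq
  exact hnot ⟨k', hkk, ha', by
    rw [chainPre_stab g k0 S0 q0 r k k' hkk a, heq]⟩

end ChainSpec

end Chains


/-- extending at a limit: `f` enumerates all previous levels, `g` is a "cofinal" subsequence -/
lemma exists_limitLevel (f : ℕ → Level) (g : ℕ → Level)
    (hg : ∀ a, selfOk (g a))
    (hgg : ∀ a a', a < a' → okPair (g a) (g a'))
    (hfg : ∀ i, ∃ a0, ∀ a, a0 ≤ a → okPair (f i) (g a)) :
    ∃ L : Level, selfOk L ∧ ∀ i, okPair (f i) L := by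
  classical
  obtain ⟨τ, hτ⟩ := exists_surjective_nat (ℕ × ℕ × ℚ)
  choose a0 ha0 using hfg
  -- task data
  set idx : ℕ → ℕ := fun k => (τ k).1 with hidx
  set nn : ℕ → ℕ := fun k => (τ k).2.1 with hnn
  set qlo : ℕ → ℚ := fun k => (f (idx k)).q (nn k) with hqlo
  obtain ⟨qhi, hlohi, hqhiτ⟩ : ∃ qhi : ℕ → ℚ, (∀ k, qlo k < qhi k) ∧
      (∀ k, qlo k < (τ k).2.2 → qhi k = (τ k).2.2) := by
    refine ⟨fun k => if h : qlo k < (τ k).2.2 then (τ k).2.2 else qlo k + 1,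
      fun k => ?_, fun k h => ?_⟩
    · dsimp only; split
      · assumption
      · linarith
    · dsimp only; rw [dif_pos h]
  set mid : ℕ → ℚ := fun k => (qlo k + qhi k) / 2 with hmid
  have hlomid : ∀ k, qlo k < mid k := by
    intro k; rw [hmid]; dsimp only; linarith [hlohi k]
  have hmidhi : ∀ k, mid k < qhi k := by
    intro k; rw [hmid]; dsimp only; linarith [hlohi k]
  obtain ⟨r, hrlo, hrmono, hrmid⟩ : ∃ r : ℕ → ℕ → ℚ, (∀ k j, qlo k < r k j) ∧
      (∀ k j, r k j < r k (j + 1)) ∧ (∀ k j, r k j < mid k) := by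
    refine ⟨fun k j => mid k - (mid k - qlo k) / ((j : ℚ) + 2), fun k j => ?_,
      fun k j => ?_, fun k j => ?_⟩
    · dsimp only
      have hd : (0 : ℚ) < mid k - qlo k := by linarith [hlomid k]
      have h2 : (1 : ℚ) < (j : ℚ) + 2 := by
        have : (0:ℚ) ≤ (j:ℚ) := Nat.cast_nonneg j
        linarith
      have := div_lt_self hd h2
      linarith
    · dsimp only
      have hd : (0 : ℚ) < mid k - qlo k := by linarith [hlomid k]
      have h23 : ((j : ℚ) + 2) < ((j : ℚ) + 1 + 2) := by linarith
      have := div_lt_div_of_pos_left hd (by positivity : (0:ℚ) < (j:ℚ) + 2) h23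
      push_cast
      linarith
    · dsimp only
      have hd : (0 : ℚ) < mid k - qlo k := by linarith [hlomid k]
      have : (0 : ℚ) < (mid k - qlo k) / ((j : ℚ) + 2) := by positivity
      linarith
  set k0 : ℕ → ℕ := fun k => a0 (idx k) with hk0
  set S0 : ℕ → Set ℕ := fun k => (f (idx k)).A (nn k) with hS0
  have hstart : ∀ k, {m | AS ((g (k0 k)).A m) (S0 k) ∧ qlo k < (g (k0 k)).q m ∧
      (g (k0 k)).q m < r k 0}.Infinite := by
    intro k
    exact (ha0 (idx k) (k0 k) le_rfl).2.2 (nn k) (r k 0) (hrlo k 0)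
  -- the chains and their pseudo-intersections
  set cc : ℕ → ℕ → ℕ := fun k j => relChain g k0 S0 qlo r (chainPre g k0 S0 qlo r k) k j
    with hcc
  set CA : ℕ → ℕ → Set ℕ := fun k j => (g (k0 k + j)).A (cc k j) with hCA
  have hCAinf : ∀ k j, (CA k j).Infinite := fun k j => (hg _).1 _
  have hCAdec : ∀ k j, AS (CA k (j + 1)) (CA k j) := fun k j =>
    (chain_succ_spec g k0 S0 qlo r hgg hstart hrmono k j).1.1
  have hP := fun k => pseudoInter (CA k) (hCAinf k) (hCAdec k)
  choose P hPinf hPAS using hP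
  have hPstart : ∀ k, AS (P k) (S0 k) :=
    fun k => (hPAS k 0).trans (chain_zero_spec g k0 S0 qlo r hstart k).1.1
  have hqccmid : ∀ k j, (g (k0 k + j)).q (cc k j) < mid k := fun k j =>
    (chain_q g k0 S0 qlo r hgg hstart hrmono k j).trans (hrmid k j)
  -- `P`'s of distinct tasks are a.d.
  have hPad : ∀ k k', k' < k → (P k ∩ P k').Finite := by
    intro k k' hkk
    set a : ℕ := max (k0 k) (k0 k') with ha
    have h1 : k0 k ≤ a := le_max_left _ _
    have h2 : k0 k' ≤ a := le_max_right _ _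
    have hne := chain_avoid g k0 S0 qlo r hgg hstart hrmono k k' hkk a h1 h2
    have hXfin : ((g a).A (chain g k0 S0 qlo r k a) ∩
        (g a).A (chain g k0 S0 qlo r k' a)).Finite := (hg a).2 _ _ hne
    have hASk : AS (P k) ((g a).A (chain g k0 S0 qlo r k a)) := by
      rw [chain_eq]
      have := hPAS k (a - k0 k)
      rw [hCA] at this
      dsimp only at this
      rwa [Nat.add_sub_cancel' h1] at this
    have hASk' : AS (P k') ((g a).A (chain g k0 S0 qlo r k' a)) := by
      rw [chain_eq]
      have := hPAS k' (a - k0 k')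
      rw [hCA] at this
      dsimp only at this
      rwa [Nat.add_sub_cancel' h2] at this
    have hmidfin : ((g a).A (chain g k0 S0 qlo r k a) ∩ P k').Finite := by
      rw [inter_comm]
      exact hASk'.inter_finite (by rwa [inter_comm] at hXfin)
    exact hASk.inter_finite hmidfin
  -- pieces and labels
  have hsp := fun k => split (hPinf k)
  choose p hp1 hp2 hp3 using hsp
  have hrq := fun k => ratEnumBtwn (mid k) (qhi k) (hmidhi k)
  choose ρ hρ1 hρ2 using hrq
  set L : Level := ⟨fun c => p (Nat.unpair c).1 (Nat.unpair c).2,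
    fun c => ρ (Nat.unpair c).1 (Nat.unpair c).2⟩ with hLdef
  have hsubP : ∀ c, L.A c ⊆ P (Nat.unpair c).1 := fun c => hp2 _ _
  -- for each `i` and `k` pick a common good absolute level
  have hcommon : ∀ i k, ∃ a j, k0 k + j = a ∧ okPair (f i) (g a) := by
    intro i k
    refine ⟨max (k0 k) (a0 i), max (k0 k) (a0 i) - k0 k,
      Nat.add_sub_cancel' (le_max_left _ _), ha0 i _ (le_max_right _ _)⟩
  refine ⟨L, ⟨fun c => hp1 _ _, ?_⟩, ?_⟩
  · -- a.d. within the level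
    intro c c' hcc'
    rcases eq_or_ne (Nat.unpair c).1 (Nat.unpair c').1 with h1 | h1
    · have h2 : (Nat.unpair c).2 ≠ (Nat.unpair c').2 := by
        intro h2
        apply hcc'
        have hcu := Nat.pair_unpair c
        have hcu' := Nat.pair_unpair c'
        rw [← hcu, ← hcu', h1, h2]
      have := hp3 (Nat.unpair c).1 (Nat.unpair c).2 (Nat.unpair c').2 h2
      refine Finite.subset finite_empty ?_
      rw [← this.inter_eq]
      exact inter_subset_inter (subset_refl _) (h1 ▸ subset_refl _)
    · rcases Nat.lt_or_ge (Nat.unpair c').1 (Nat.unpair c).1 with hlt | hge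
      · exact Finite.subset (hPad _ _ hlt) (inter_subset_inter (hsubP c) (hsubP c'))
      · have hlt : (Nat.unpair c).1 < (Nat.unpair c').1 := by omega
        have := hPad _ _ hlt
        rw [inter_comm] at this
        exact Finite.subset this (inter_subset_inter (hsubP c) (hsubP c'))
  · -- okPair (f i) L
    intro i
    refine ⟨?_, ?_, ?_⟩
    · -- H4'
      intro c n'
      obtain ⟨a, j, haj, hoki⟩ := hcommon i (Nat.unpair c).1
      set k := (Nat.unpair c).1
      have hASPc : AS (L.A c) ((g a).A (cc k j)) := by
        have := hPAS k j
        rw [hCA] at this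
        dsimp only at this
        rw [haj] at this
        exact (AS.of_subset (hsubP c)).trans this
      rcases hoki.1 (cc k j) n' with ⟨hAS, hq⟩ | hfin
      · refine Or.inl ⟨hASPc.trans hAS, ?_⟩
        have hq2 : (g a).q (cc k j) < mid k := by
          have := hqccmid k j
          rwa [haj] at this
        have hq3 : mid k < L.q c := hρ1 _ _ |>.1
        exact hq.trans (hq2.trans hq3)
      · exact Or.inr (hASPc.inter_finite hfin)
    · -- H3
      intro c
      obtain ⟨a, j, haj, hoki⟩ := hcommon i (Nat.unpair c).1
      set k := (Nat.unpair c).1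
      obtain ⟨m', hm'⟩ := hoki.2.1 (cc k j)
      have hASPc : AS (L.A c) ((g a).A (cc k j)) := by
        have := hPAS k j
        rw [hCA] at this
        dsimp only at this
        rw [haj] at this
        exact (AS.of_subset (hsubP c)).trans this
      exact ⟨m', hASPc.trans hm'⟩
    · -- E''
      intro n q' hq'
      obtain ⟨k, hk⟩ := hτ (i, n, q')
      have hidxk : idx k = i := by rw [hidx]; dsimp only; rw [hk]
      have hnnk : nn k = n := by rw [hnn]; dsimp only; rw [hk]
      have hqlok : qlo k = (f i).q n := by
        simp only [hqlo]
        rw [hidxk, hnnk]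
      have hτ2 : (τ k).2.2 = q' := by rw [hk]
      have hqhik : qhi k = q' := by
        rw [← hτ2]
        exact hqhiτ k (by rw [hτ2, hqlok]; exact hq')
      set s₂ : ℚ := (mid k + qhi k) / 2 with hs₂
      have hms : mid k < s₂ ∧ s₂ < qhi k := by
        constructor <;> (rw [hs₂]; linarith [hmidhi k])
      have hinf := hρ2 k s₂ hms.1 hms.2
      have himg : ((fun j => Nat.pair k j) '' {j | ρ k j = s₂}).Infinite :=
        hinf.image (Set.injOn_of_injective (fun j j' h => (Nat.pair_eq_pair.1 h).2))
      refine himg.mono ?_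
      rintro _ ⟨j, hj, rfl⟩
      simp only [mem_setOf_eq] at hj ⊢
      simp only [hLdef, Nat.unpair_pair]
      refine ⟨?_, ?_, ?_⟩
      · -- AS to (f i).A n
        have h2 : AS (P k) ((f i).A n) := by
          have := hPstart k
          simp only [hS0] at this
          rwa [hidxk, hnnk] at this
        exact (AS.of_subset (hp2 k j)).trans h2
      · rw [hj, ← hqlok]
        linarith [hlomid k, hms.1]
      · rw [hj, ← hqhik]
        exact hms.2


/-! ### The transfinite recursion -/

def Good (γ : Ordinal.{0}) (IH : ∀ β, β < γ → Level) : Prop :=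
  (∀ β h, selfOk (IH β h)) ∧
    ∀ β β' h h', β < β' → okPair (IH β h) (IH β' h')

lemma countable_Iio {γ : Ordinal.{0}} (h : γ < Ordinal.omega 1) :
    Countable {β : Ordinal // β < γ} := by
  have h1 : Cardinal.mk ↥(Set.Iio γ) = Cardinal.lift.{1} γ.card := Ordinal.mk_Iio_ordinal γ
  have h2 : γ.card < Cardinal.aleph 1 := by
    rwa [← Cardinal.lt_ord, Cardinal.ord_aleph]
  have h3 : γ.card ≤ Cardinal.aleph0 := by
    rwa [← Cardinal.succ_aleph0, Order.lt_succ_iff] at h2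
  have h4 : Cardinal.mk ↥(Set.Iio γ) ≤ Cardinal.aleph0 := by
    rw [h1]; exact Cardinal.lift_le_aleph0.2 h3
  exact Cardinal.mk_le_aleph0_iff.1 h4

lemma ext_total (γ : Ordinal.{0}) (IH : ∀ β, β < γ → Level) :
    ∃ L, (γ < Ordinal.omega 1 ∧ Good γ IH) →
      selfOk L ∧ ∀ β (h : β < γ), okPair (IH β h) L := by
  classical
  by_cases H : γ < Ordinal.omega 1 ∧ Good γ IH
  · rcases Ordinal.zero_or_succ_or_isSuccLimit γ with h0 | ⟨δ, hδ⟩ | hlim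
    · subst h0
      obtain ⟨L, hL⟩ := exists_base
      exact ⟨L, fun _ => ⟨hL, fun β h => absurd h (not_lt_of_ge (zero_le (a := β)))⟩⟩
    · subst hδ
      have hδlt : δ < Order.succ δ := Order.lt_succ δ
      obtain ⟨L, hL1, hL2, hL3⟩ := exists_succLevel (IH δ hδlt) (H.2.1 δ hδlt)
      refine ⟨L, fun _ => ⟨hL1, ?_⟩⟩
      intro β h
      rcases lt_or_eq_of_le (Order.lt_succ_iff.1 h) with hlt | heq
      · exact hL3 (IH β h) (H.2.2 β δ h hδlt hlt)
      · subst heq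
        exact hL2
    · have γpos : (0 : Ordinal) < γ := hlim.pos
      have : Countable {β : Ordinal // β < γ} := countable_Iio H.1
      have : Nonempty {β : Ordinal // β < γ} := ⟨⟨0, γpos⟩⟩
      obtain ⟨s, hs⟩ := exists_surjective_nat {β : Ordinal // β < γ}
      set lam : ℕ → {β : Ordinal // β < γ} := fun i => Nat.rec
        ⟨Order.succ (s 0).1, hlim.succ_lt (s 0).2⟩
        (fun i li => ⟨Order.succ (max li.1 (s (i+1)).1),
          hlim.succ_lt (max_lt li.2 (s (i+1)).2)⟩) i with hlam
      have hmono : ∀ i, (lam i).1 < (lam (i+1)).1 :=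
        fun i => (le_max_left _ _).trans_lt (Order.lt_succ _)
      have hmono' : StrictMono (fun i => (lam i).1) := strictMono_nat_of_lt_succ hmono
      have hcof : ∀ i, (s i).1 < (lam i).1 := by
        intro i
        cases i with
        | zero => exact Order.lt_succ _
        | succ i => exact (le_max_right _ _).trans_lt (Order.lt_succ _)
      set f : ℕ → Level := fun i => IH (s i).1 (s i).2 with hf
      set g : ℕ → Level := fun a => IH (lam a).1 (lam a).2 with hgdef
      have hg : ∀ a, selfOk (g a) := fun a => H.2.1 _ _
      have hgg : ∀ a a', a < a' → okPair (g a) (g a') :=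
        fun a a' haa => H.2.2 _ _ _ _ (hmono' haa)
      have hfg : ∀ i, ∃ a0, ∀ a, a0 ≤ a → okPair (f i) (g a) :=
        fun i => ⟨i, fun a hia =>
          H.2.2 (s i).1 (lam a).1 _ _ ((hcof i).trans_le (hmono'.monotone hia))⟩
      obtain ⟨L, hL1, hL2⟩ := exists_limitLevel f g hg hgg hfg
      refine ⟨L, fun _ => ⟨hL1, ?_⟩⟩
      intro β h
      obtain ⟨i, hi⟩ := hs ⟨β, h⟩
      have h1 : (s i).1 = β := by rw [hi]
      subst h1
      exact hL2 i
  · exact ⟨⟨fun _ => univ, fun _ => 0⟩, fun hc => absurd hc H⟩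

noncomputable def lev : Ordinal.{0} → Level :=
  Ordinal.lt_wf.fix fun γ IH => (ext_total γ IH).choose

lemma lev_eq (γ : Ordinal.{0}) :
    lev γ = (ext_total γ fun β _ => lev β).choose :=
  Ordinal.lt_wf.fix_eq _ γ

lemma lev_good : ∀ γ : Ordinal.{0}, γ < Ordinal.omega 1 →
    selfOk (lev γ) ∧ ∀ β (h : β < γ), okPair (lev β) (lev γ) := by
  intro γ
  induction γ using Ordinal.lt_wf.induction with
  | _ γ IH =>
    intro hγ
    have hGood : Good γ (fun β _ => lev β) :=
      ⟨fun β h => (IH β h (h.trans hγ)).1,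
       fun β β' h h' hββ => (IH β' h' (h'.trans hγ)).2 β hββ⟩
    have hspec := (ext_total γ (fun β _ => lev β)).choose_spec ⟨hγ, hGood⟩
    rw [lev_eq γ]
    exact ⟨hspec.1, fun β h => hspec.2 β h⟩


/-! ### Summary interface -/

noncomputable def AA : Ordinal.{0} → ℕ → Set ℕ := fun γ n => (lev γ).A n
noncomputable def qq : Ordinal.{0} → ℕ → ℚ := fun γ n => (lev γ).q n

lemma AA_infinite {γ : Ordinal.{0}} (hγ : γ < Ordinal.omega 1) (n : ℕ) :
    (AA γ n).Infinite := (lev_good γ hγ).1.1 n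

lemma AA_cross {β γ : Ordinal.{0}} (hβγ : β < γ) (hγ : γ < Ordinal.omega 1) (n m : ℕ) :
    (AS (AA γ n) (AA β m) ∧ qq β m < qq γ n) ∨ (AA γ n ∩ AA β m).Finite :=
  ((lev_good γ hγ).2 β hβγ).1 n m

lemma AA_anc {β γ : Ordinal.{0}} (hβγ : β < γ) (hγ : γ < Ordinal.omega 1) (n : ℕ) :
    ∃ m, AS (AA γ n) (AA β m) :=
  ((lev_good γ hγ).2 β hβγ).2.1 n

/-! ### Ultrafilter facts -/

/-- a free ultrafilter contains no finite set -/
def IsFreeU (u : Ultrafilter ℕ) : Prop := ∀ s : Set ℕ, s.Finite → s ∉ u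

lemma mem_of_AS {u : Ultrafilter ℕ} (hu : IsFreeU u) {a b : Set ℕ}
    (ha : a ∈ u) (hAS : AS a b) : b ∈ u := by
  have h1 : (a \ b)ᶜ ∈ u := Ultrafilter.compl_mem_iff_notMem.2 (hu _ hAS)
  have h2 : a ∩ (a \ b)ᶜ ∈ u := Filter.inter_mem ha h1
  refine Filter.mem_of_superset h2 ?_
  rintro x ⟨hxa, hxd⟩
  by_contra hxb
  exact hxd ⟨hxa, hxb⟩

lemma members_infinite {u : Ultrafilter ℕ} (hu : IsFreeU u) {a : Set ℕ} (ha : a ∈ u) :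
    a.Infinite := by
  by_contra h
  rw [Set.not_infinite] at h
  exact hu a h ha

lemma bounded_of_countable (S : Set Ordinal.{0}) (hc : S.Countable)
    (hS : ∀ γ ∈ S, γ < Ordinal.omega 1) :
    ∃ δ, δ < Ordinal.omega 1 ∧ ∀ γ ∈ S, γ < δ := by
  rcases S.eq_empty_or_nonempty with rfl | hne
  · exact ⟨1, Ordinal.one_lt_omega0.trans Ordinal.omega0_lt_omega_one, by simp⟩
  · obtain ⟨φ, hφ⟩ := hc.exists_eq_range hne
    have hsup : iSup φ < (Cardinal.aleph 1).ord := by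
      rw [Cardinal.ord_aleph]
      refine Ordinal.iSup_lt_omega_one (fun n => ?_)
      exact hS _ (hφ ▸ mem_range_self n)
    have hlim := Cardinal.isSuccLimit_ord (Cardinal.aleph0_le_aleph 1)
    refine ⟨Order.succ (iSup φ), ?_, ?_⟩
    · have := hlim.succ_lt hsup
      rwa [Cardinal.ord_aleph] at this
    · intro γ hγ
      rw [hφ] at hγ
      obtain ⟨n, rfl⟩ := hγ
      exact (Ordinal.le_iSup φ n).trans_lt (Order.lt_succ _)

end PA


open PA

/-- An index type of cardinality `ℵ₁`: the countable ordinals. -/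
abbrev Omega1Index : Type 1 := {o : Ordinal // o < Ordinal.omega 1}

set_option maxHeartbeats 1000000 in
/-- There is a separable compact Hausdorff space with a cover by `ℵ₁` many closed `Gδ`
sets that has no countable subcover. -/
theorem exists_separable_pseudoAronszajn :
    ∃ (X : Type) (_ : TopologicalSpace X), CompactSpace X ∧ T2Space X ∧
      (∃ D : Set X, D.Countable ∧ Dense D) ∧
      ∃ Z : Omega1Index → Set X,
        (∀ α, IsClosed (Z α)) ∧ (∀ α, IsGδ (Z α)) ∧ (⋃ α, Z α) = Set.univ ∧
        ¬ ∃ C : Set Omega1Index, C.Countable ∧ (⋃ α ∈ C, Z α) = Set.univ := by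
  classical
  refine ⟨Ultrafilter ℕ, inferInstance, inferInstance, inferInstance,
    ⟨Set.range (pure : ℕ → Ultrafilter ℕ), countable_range _, denseRange_pure⟩, ?_⟩
  set Z : Omega1Index → Set (Ultrafilter ℕ) := fun o =>
    if h : o.1 < Ordinal.omega0 then
      {pure (Classical.choose (Ordinal.lt_omega0.1 h))}
    else {u : Ultrafilter ℕ | ∀ n, (AA o.1 n)ᶜ ∈ u} with hZ
  have hZW : ∀ (o : Omega1Index) (h : ¬ o.1 < Ordinal.omega0),
      Z o = {u : Ultrafilter ℕ | ∀ n, (AA o.1 n)ᶜ ∈ u} := by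
    intro o h
    rw [hZ]
    exact dif_neg h
  have hZP : ∀ (o : Omega1Index) (h : o.1 < Ordinal.omega0),
      Z o = {pure (Classical.choose (Ordinal.lt_omega0.1 h))} := by
    intro o h
    rw [hZ]
    exact dif_pos h
  refine ⟨Z, ?_, ?_, ?_, ?_⟩
  · -- closed
    intro o
    by_cases h : o.1 < Ordinal.omega0
    · rw [hZP o h]
      exact isClosed_singleton
    · rw [hZW o h, setOf_forall]
      exact isClosed_iInter (fun n => ultrafilter_isClosed_basic _)
  · -- Gδ
    intro o
    by_cases h : o.1 < Ordinal.omega0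
    · rw [hZP o h]
      set m := Classical.choose (Ordinal.lt_omega0.1 h)
      have : {(pure m : Ultrafilter ℕ)} = {u : Ultrafilter ℕ | {m} ∈ u} := by
        ext u
        simp only [mem_singleton_iff, mem_setOf_eq]
        constructor
        · rintro rfl
          exact Ultrafilter.mem_pure.2 rfl
        · intro hm
          obtain ⟨x, hx, rfl⟩ := Ultrafilter.eq_pure_of_finite_mem (finite_singleton m) hm
          rw [mem_singleton_iff.1 hx]
      rw [this]
      exact (ultrafilter_isOpen_basic _).isGδ
    · rw [hZW o h, setOf_forall]
      exact IsGδ.iInter_of_isOpen (fun n => ultrafilter_isOpen_basic _)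
  · -- cover
    rw [eq_univ_iff_forall]
    intro u
    rw [mem_iUnion]
    by_cases hfree : IsFreeU u
    · -- the set of levels met by `u` is countable, hence bounded
      set Su : Set Ordinal.{0} := {γ | γ < Ordinal.omega 1 ∧ ∃ n, AA γ n ∈ u} with hSu
      have hSucnt : Su.Countable := by
        rw [Set.countable_iff_exists_injective]
        refine ⟨fun γs => Encodable.encode (qq γs.1 (Classical.choose γs.2.2)), ?_⟩
        have key : ∀ γs γs' : ↥Su, γs.1 < γs'.1 →
            qq γs.1 (Classical.choose γs.2.2) < qq γs'.1 (Classical.choose γs'.2.2) := by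
          intro γs γs' hlt
          have h1 : AA γs.1 (Classical.choose γs.2.2) ∈ u := Classical.choose_spec γs.2.2
          have h2 : AA γs'.1 (Classical.choose γs'.2.2) ∈ u := Classical.choose_spec γs'.2.2
          rcases AA_cross hlt γs'.2.1 (Classical.choose γs'.2.2) (Classical.choose γs.2.2)
            with ⟨_, hq⟩ | hfin
          · exact hq
          · exact absurd hfin (members_infinite hfree (Filter.inter_mem h2 h1))
        intro γs γs' heq
        have henc := Encodable.encode_injective heq
        rcases lt_trichotomy γs.1 γs'.1 with hlt | heq2 | hlt
        · exact absurd henc (ne_of_lt (key _ _ hlt))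
        · exact Subtype.ext heq2
        · exact absurd henc.symm (ne_of_lt (key _ _ hlt))
      have hSub : ∀ γ ∈ Su, γ < Ordinal.omega 1 := fun γ h => h.1
      obtain ⟨δ, hδ1, hδ2⟩ := bounded_of_countable Su hSucnt hSub
      -- pick a level above the bound and above ω
      set γ : Ordinal.{0} := max δ (Ordinal.omega0 + 1) with hγdef
      have hγ1 : γ < Ordinal.omega 1 := by
        rw [hγdef]
        apply max_lt hδ1
        rw [Ordinal.add_one_eq_succ]
        have := (Cardinal.isSuccLimit_ord (Cardinal.aleph0_le_aleph 1)).succ_lt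
          (a := Ordinal.omega0)
          (by rw [Cardinal.ord_aleph]; exact Ordinal.omega0_lt_omega_one)
        rwa [Cardinal.ord_aleph] at this
      have hγω : ¬ γ < Ordinal.omega0 := by
        rw [not_lt, hγdef]
        calc Ordinal.omega0 ≤ Ordinal.omega0 + 1 := le_of_lt (lt_add_one _)
        _ ≤ _ := le_max_right _ _
      refine ⟨⟨γ, hγ1⟩, ?_⟩
      rw [hZW ⟨γ, hγ1⟩ hγω]
      intro n
      refine Ultrafilter.compl_mem_iff_notMem.2 ?_
      intro hmem
      have : γ ∈ Su := ⟨hγ1, n, hmem⟩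
      exact absurd (hδ2 γ this) (not_lt.2 (le_max_left _ _))
    · -- principal ultrafilter
      have : ∃ s : Set ℕ, s.Finite ∧ s ∈ u := by
        by_contra hcon
        push_neg at hcon
        exact hfree (fun s hs => hcon s hs)
      obtain ⟨s, hsf, hsu⟩ := this
      obtain ⟨n, _, rfl⟩ := Ultrafilter.eq_pure_of_finite_mem hsf hsu
      have hn : ((n : Ordinal.{0})) < Ordinal.omega0 := Ordinal.nat_lt_omega0 n
      refine ⟨⟨(n : Ordinal), hn.trans Ordinal.omega0_lt_omega_one⟩, ?_⟩
      rw [hZP _ hn]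
      have hspec := Classical.choose_spec (Ordinal.lt_omega0.1 hn)
      have : Classical.choose (Ordinal.lt_omega0.1 hn) = n :=
        (Nat.cast_inj.1 hspec.symm)
      rw [this]
      rfl
  · -- no countable subcover
    rintro ⟨C, hC, hCcov⟩
    set S : Set Ordinal.{0} := (fun o : Omega1Index => o.1) '' C with hSdef
    have hScnt : S.Countable := hC.image _
    have hSb : ∀ γ ∈ S, γ < Ordinal.omega 1 := by
      rintro γ ⟨o, _, rfl⟩
      exact o.2
    obtain ⟨δ, hδ1, hδ2⟩ := bounded_of_countable S hScnt hSb
    -- a free ultrafilter containing `AA δ 0`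
    have hAinf : (AA δ 0).Infinite := AA_infinite hδ1 0
    haveI hNB : (Filter.cofinite ⊓ Filter.principal (AA δ 0)).NeBot :=
      Filter.cofinite_inf_principal_neBot_iff.2 hAinf
    set u : Ultrafilter ℕ := Ultrafilter.of (Filter.cofinite ⊓ Filter.principal (AA δ 0))
      with hu
    have hle := Ultrafilter.of_le (Filter.cofinite ⊓ Filter.principal (AA δ 0))
    have hmem : AA δ 0 ∈ u := hle (Filter.mem_inf_of_right (Filter.mem_principal_self _))
    have hfree : IsFreeU u := by
      intro s hs hsu
      have hsc : sᶜ ∈ u := hle (Filter.mem_inf_of_left (by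
        rw [Filter.mem_cofinite, compl_compl]; exact hs))
      exact (Ultrafilter.compl_mem_iff_notMem.1 hsc) hsu
    have humem : u ∈ ⋃ o ∈ C, Z o := hCcov ▸ mem_univ u
    obtain ⟨o, hoC, hu2⟩ := mem_iUnion₂.1 humem
    by_cases h : o.1 < Ordinal.omega0
    · rw [hZP o h] at hu2
      rw [mem_singleton_iff] at hu2
      have : ({Classical.choose (Ordinal.lt_omega0.1 h)} : Set ℕ) ∈ u := by
        rw [hu2]
        exact Ultrafilter.mem_pure.2 rfl
      exact hfree _ (finite_singleton _) this
    · rw [hZW o h] at hu2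
      have hγS : o.1 ∈ S := ⟨o, hoC, rfl⟩
      have hγδ : o.1 < δ := hδ2 _ hγS
      obtain ⟨m, hm⟩ := AA_anc hγδ hδ1 0
      have : AA o.1 m ∈ u := mem_of_AS hfree hmem hm
      exact (Ultrafilter.compl_mem_iff_notMem.1 (hu2 m)) this
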